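/- There is an enumeration operator Γ such that Γ maps every copy of Ê₁ to a linear order with a least element and no greatest element, and every copy of Ê₂ to a linear order with neither least nor greatest element. The operator outputs the set of tuples (x₀,…,xₙ) with x₀ < x₁ < ⋯ < xₙ (as naturals) and each [x_i] (i<n) of size ≥ 2, ordered by: x̄ ≺ ȳ iff x̄ properly extends ȳ, or x_i < y_i at the first index i where they differ. -/

import Mathlib

/-- A finite piece of an atomic diagram of a structure in a language with one
binary relation, with domain a finite set of naturals. -/
structure FinD where
  dom : Finset ℕ
  rel : ℕ → ℕ → Prop

/-- `β` extends `α` as a finite atomic diagram. -/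
def FinD.Ext (α β : FinD) : Prop :=
  α.dom ⊆ β.dom ∧ ∀ x ∈ α.dom, ∀ y ∈ α.dom, (α.rel x y ↔ β.rel x y)

/-- An enumeration operator: it monotonically enumerates membership facts,
positive atomic facts `R(x, y)` and negative atomic facts `¬ R(x, y)`. -/
structure EOp where
  mem : FinD → Set ℕ
  pos : FinD → Set (ℕ × ℕ)
  neg : FinD → Set (ℕ × ℕ)
  mono_mem : ∀ {α β : FinD}, α.Ext β → mem α ⊆ mem β
  mono_pos : ∀ {α β : FinD}, α.Ext β → pos α ⊆ pos β
  mono_neg : ∀ {α β : FinD}, α.Ext β → neg α ⊆ neg β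

/-- A (possibly infinite) diagram with domain a set of naturals. -/
structure Diag where
  dom : Set ℕ
  rel : ℕ → ℕ → Prop

/-- `α` is a finite subdiagram of `L`. -/
def FinD.SubDiag (α : FinD) (L : Diag) : Prop :=
  ↑α.dom ⊆ L.dom ∧ ∀ x ∈ α.dom, ∀ y ∈ α.dom, (α.rel x y ↔ L.rel x y)

/-- Membership facts enumerated by `Γ` on the diagram `L`. -/
def EOp.memD (Γ : EOp) (L : Diag) : Set ℕ :=
  {x | ∃ α : FinD, α.SubDiag L ∧ x ∈ Γ.mem α}

/-- Positive facts enumerated by `Γ` on the diagram `L`. -/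
def EOp.posD (Γ : EOp) (L : Diag) : Set (ℕ × ℕ) :=
  {p | ∃ α : FinD, α.SubDiag L ∧ p ∈ Γ.pos α}

/-- Negative facts enumerated by `Γ` on the diagram `L`. -/
def EOp.negD (Γ : EOp) (L : Diag) : Set (ℕ × ℕ) :=
  {p | ∃ α : FinD, α.SubDiag L ∧ p ∈ Γ.neg α}

/-- `L` is (the atomic diagram of) a copy of the structure `(τ, r)`. -/
def IsCopyR {τ : Type} (r : τ → τ → Prop) (L : Diag) : Prop :=
  ∃ f : τ → ℕ, Function.Injective f ∧ Set.range f = L.dom ∧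
    ∀ i j : τ, (L.rel (f i) (f j) ↔ r i j)

/-- The output of `Γ` on `L` is (the atomic diagram of) a copy of `(σ, s)`. -/
def EOp.OutCopyR {σ : Type} (Γ : EOp) (s : σ → σ → Prop) (L : Diag) : Prop :=
  ∃ g : σ → ℕ, Function.Injective g ∧ Γ.memD L = Set.range g ∧
    (∀ a b : σ, ((g a, g b) ∈ Γ.posD L ↔ s a b)) ∧
    (∀ a b : σ, ((g a, g b) ∈ Γ.negD L ↔ ¬ s a b))

/-- `{A₁, A₂} ≤_c {B₁, B₂}` : there is an enumeration operator mapping every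
copy of `A₁` to a copy of `B₁` and every copy of `A₂` to a copy of `B₂`. -/
def PairLE {τ₁ τ₂ σ₁ σ₂ : Type} (r₁ : τ₁ → τ₁ → Prop) (r₂ : τ₂ → τ₂ → Prop)
    (s₁ : σ₁ → σ₁ → Prop) (s₂ : σ₂ → σ₂ → Prop) : Prop :=
  ∃ Γ : EOp, (∀ L : Diag, IsCopyR r₁ L → Γ.OutCopyR s₁ L) ∧
    (∀ L : Diag, IsCopyR r₂ L → Γ.OutCopyR s₂ L)

/-- The equivalence structure `E` with infinitely many infinite classes and no
finite classes: classes are the columns of `ℕ × ℕ`. -/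
def relE : ℕ × ℕ → ℕ × ℕ → Prop := fun p q => p.1 = q.1

/-- The equivalence structure `E_k` with infinitely many infinite classes and
exactly one class of size `k`. -/
def relEk (k : ℕ) : (ℕ × ℕ) ⊕ Fin k → (ℕ × ℕ) ⊕ Fin k → Prop := fun x y =>
  match x, y with
  | Sum.inl p, Sum.inl q => p.1 = q.1
  | Sum.inr _, Sum.inr _ => True
  | _, _ => False

/-- The equivalence structure `Ê_k` with infinitely many infinite classes and
infinitely many classes of size exactly `k`. -/
def relEhat (k : ℕ) : (ℕ × ℕ) ⊕ (ℕ × Fin k) → (ℕ × ℕ) ⊕ (ℕ × Fin k) → Prop := fun x y =>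
  match x, y with
  | Sum.inl p, Sum.inl q => p.1 = q.1
  | Sum.inr p, Sum.inr q => p.1 = q.1
  | _, _ => False

/-- The output of `Γ` on `L` is (the full atomic diagram of) a linear order. -/
def EOp.OutLinear (Γ : EOp) (L : Diag) : Prop :=
  (∀ x ∈ Γ.memD L, (x, x) ∉ Γ.posD L) ∧
  (∀ x ∈ Γ.memD L, ∀ y ∈ Γ.memD L, ∀ z ∈ Γ.memD L,
    (x, y) ∈ Γ.posD L → (y, z) ∈ Γ.posD L → (x, z) ∈ Γ.posD L) ∧
  (∀ x ∈ Γ.memD L, ∀ y ∈ Γ.memD L, x ≠ y →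
    (x, y) ∈ Γ.posD L ∨ (y, x) ∈ Γ.posD L) ∧
  (∀ x ∈ Γ.memD L, ∀ y ∈ Γ.memD L, ((x, y) ∈ Γ.negD L ↔ (x, y) ∉ Γ.posD L))

/-- The output linear order has a least element. -/
def EOp.OutHasLeast (Γ : EOp) (L : Diag) : Prop :=
  ∃ x ∈ Γ.memD L, ∀ y ∈ Γ.memD L, y ≠ x → (x, y) ∈ Γ.posD L

/-- The output linear order has a greatest element. -/
def EOp.OutHasGreatest (Γ : EOp) (L : Diag) : Prop :=
  ∃ x ∈ Γ.memD L, ∀ y ∈ Γ.memD L, y ≠ x → (y, x) ∈ Γ.posD L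


/-- Strict order on tuples: proper extensions are smaller, otherwise compare
at the first difference. -/
def llt : List ℕ → List ℕ → Prop
  | [], _ => False
  | _ :: _, [] => True
  | a :: l, b :: m => a < b ∨ (a = b ∧ llt l m)

theorem llt_irrefl : ∀ l : List ℕ, ¬ llt l l
  | [] => fun h => h
  | a :: l => fun h => by
      rcases h with h | ⟨_, h⟩
      · omega
      · exact llt_irrefl l h

theorem llt_trans : ∀ l m n : List ℕ, llt l m → llt m n → llt l n
  | [], _, _, h, _ => h.elim
  | _ :: _, [], _, _, h => h.elim
  | _ :: _, _ :: _, [], _, _ => trivial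
  | a :: l, b :: m, c :: n, h1, h2 => by
      rcases h1 with h1 | ⟨rfl, h1⟩ <;> rcases h2 with h2 | ⟨rfl, h2⟩
      · exact Or.inl (h1.trans h2)
      · exact Or.inl h1
      · exact Or.inl h2
      · exact Or.inr ⟨rfl, llt_trans _ _ _ h1 h2⟩

theorem llt_asymm {l m : List ℕ} (h : llt l m) : ¬ llt m l :=
  fun h' => llt_irrefl l (llt_trans _ _ _ h h')

theorem llt_total : ∀ l m : List ℕ, l ≠ m → llt l m ∨ llt m l
  | [], [], h => absurd rfl h
  | [], _ :: _, _ => Or.inr trivial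
  | _ :: _, [], _ => Or.inl trivial
  | a :: l, b :: m, h => by
      rcases Nat.lt_trichotomy a b with h1 | rfl | h1
      · exact Or.inl (Or.inl h1)
      · have hlm : l ≠ m := fun e => h (by rw [e])
        rcases llt_total l m hlm with h2 | h2
        · exact Or.inl (Or.inr ⟨rfl, h2⟩)
        · exact Or.inr (Or.inr ⟨rfl, h2⟩)
      · exact Or.inr (Or.inl h1)

theorem llt_concat : ∀ (l : List ℕ) (c : ℕ), llt (l ++ [c]) l
  | [], _ => trivial
  | _ :: l, c => Or.inr ⟨rfl, llt_concat l c⟩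

theorem llt_cons_nil {a : ℕ} {l : List ℕ} : llt (a :: l) [] := trivial

noncomputable section
open Classical

/-- `x` has a confirmed neighbour in the finite diagram `α`. -/
def NbrF (α : FinD) (x : ℕ) : Prop :=
  ∃ y ∈ α.dom, y ≠ x ∧ (α.rel x y ∨ α.rel y x)

/-- `x` has a neighbour in the diagram `L`. -/
def NbrD (L : Diag) (x : ℕ) : Prop :=
  ∃ y ∈ L.dom, y ≠ x ∧ (L.rel x y ∨ L.rel y x)

/-- Valid tuples: nonempty strictly increasing lists of elements of `S` whose
non-last elements all satisfy `N`. -/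
def Valid (S : Set ℕ) (N : ℕ → Prop) (l : List ℕ) : Prop :=
  l ≠ [] ∧ l.Pairwise (· < ·) ∧ (∀ x ∈ l, x ∈ S) ∧ ∀ x ∈ l.dropLast, N x

theorem Valid.mono {S S' : Set ℕ} {N N' : ℕ → Prop} {l : List ℕ}
    (h : Valid S N l) (hS : S ⊆ S') (hN : ∀ x ∈ S, N x → N' x) :
    Valid S' N' l := by
  obtain ⟨h1, h2, h3, h4⟩ := h
  refine ⟨h1, h2, fun x hx => hS (h3 x hx), fun x hx => ?_⟩
  exact hN x (h3 x (List.dropLast_subset l hx)) (h4 x hx)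

theorem nbrF_mono {α β : FinD} (h : α.Ext β) {x : ℕ} (hx : x ∈ α.dom)
    (hn : NbrF α x) : NbrF β x := by
  obtain ⟨y, hy, hyx, hr⟩ := hn
  exact ⟨y, h.1 hy, hyx, by
    rcases hr with hr | hr
    · exact Or.inl ((h.2 x hx y hy).1 hr)
    · exact Or.inr ((h.2 y hy x hx).1 hr)⟩

/-- The enumeration operator. -/
def Gam : EOp where
  mem α := {n | ∃ l, Valid ↑α.dom (NbrF α) l ∧ n = Encodable.encode l}
  pos α := {p | ∃ l m, Valid ↑α.dom (NbrF α) l ∧ Valid ↑α.dom (NbrF α) m ∧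
    llt l m ∧ p = (Encodable.encode l, Encodable.encode m)}
  neg α := {p | ∃ l m, Valid ↑α.dom (NbrF α) l ∧ Valid ↑α.dom (NbrF α) m ∧
    ¬ llt l m ∧ p = (Encodable.encode l, Encodable.encode m)}
  mono_mem := by
    rintro α β h n ⟨l, hl, rfl⟩
    exact ⟨l, hl.mono (fun x hx => h.1 hx) (fun x hx => nbrF_mono h hx), rfl⟩
  mono_pos := by
    rintro α β h p ⟨l, m, hl, hm, hlt, rfl⟩
    exact ⟨l, m, hl.mono (fun x hx => h.1 hx) (fun x hx => nbrF_mono h hx),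
      hm.mono (fun x hx => h.1 hx) (fun x hx => nbrF_mono h hx), hlt, rfl⟩
  mono_neg := by
    rintro α β h p ⟨l, m, hl, hm, hlt, rfl⟩
    exact ⟨l, m, hl.mono (fun x hx => h.1 hx) (fun x hx => nbrF_mono h hx),
      hm.mono (fun x hx => h.1 hx) (fun x hx => nbrF_mono h hx), hlt, rfl⟩

/-- witness function for neighbours in `L`. -/
def wD (L : Diag) (x : ℕ) : ℕ := if h : NbrD L x then h.choose else 0

theorem wD_spec {L : Diag} {x : ℕ} (h : NbrD L x) :
    wD L x ∈ L.dom ∧ wD L x ≠ x ∧ (L.rel x (wD L x) ∨ L.rel (wD L x) x) := by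
  rw [wD, dif_pos h]
  exact h.choose_spec

/-- Valid lists transfer from a subdiagram to the full diagram. -/
theorem valid_of_subdiag {α : FinD} {L : Diag} (h : α.SubDiag L) {l : List ℕ}
    (hl : Valid ↑α.dom (NbrF α) l) : Valid L.dom (NbrD L) l := by
  refine hl.mono h.1 (fun x hx hn => ?_)
  obtain ⟨y, hy, hyx, hr⟩ := hn
  exact ⟨y, h.1 hy, hyx, by
    rcases hr with hr | hr
    · exact Or.inl ((h.2 x hx y hy).1 hr)
    · exact Or.inr ((h.2 y hy x hx).1 hr)⟩

/-- Valid lists for `L` are valid for a suitable finite subdiagram of `L`. -/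
theorem valid_to_fin {L : Diag} {l : List ℕ} (hl : Valid L.dom (NbrD L) l)
    (F : Finset ℕ) (hF : ↑F ⊆ L.dom) (h1 : ∀ x ∈ l, x ∈ F)
    (h2 : ∀ x ∈ l.dropLast, wD L x ∈ F) :
    Valid ↑(FinD.mk F L.rel).dom (NbrF (FinD.mk F L.rel)) l := by
  obtain ⟨g1, g2, g3, g4⟩ := hl
  refine ⟨g1, g2, fun x hx => h1 x hx, fun x hx => ?_⟩
  obtain ⟨hw1, hw2, hw3⟩ := wD_spec (g4 x hx)
  exact ⟨wD L x, h2 x hx, hw2, hw3⟩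

/-- The canonical finite piece for a valid list. -/
def FinOf (L : Diag) (l : List ℕ) : Finset ℕ :=
  l.toFinset ∪ (l.dropLast.map (wD L)).toFinset

theorem finOf_sub {L : Diag} {l : List ℕ} (hl : Valid L.dom (NbrD L) l) :
    ↑(FinOf L l) ⊆ L.dom := by
  intro x hx
  simp only [FinOf, Finset.coe_union, Set.mem_union, Finset.mem_coe,
    List.mem_toFinset, List.mem_map] at hx
  rcases hx with hx | ⟨y, hy, rfl⟩
  · exact hl.2.2.1 x hx
  · exact (wD_spec (hl.2.2.2 y hy)).1

theorem finOf_mem {L : Diag} (l : List ℕ) : ∀ x ∈ l, x ∈ FinOf L l := by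
  intro x hx
  simp [FinOf, hx]

theorem finOf_w {L : Diag} (l : List ℕ) : ∀ x ∈ l.dropLast, wD L x ∈ FinOf L l := by
  intro x hx
  simp only [FinOf, Finset.mem_union, List.mem_toFinset, List.mem_map]
  exact Or.inr ⟨x, hx, rfl⟩

theorem memD_eq (L : Diag) :
    Gam.memD L = {n | ∃ l, Valid L.dom (NbrD L) l ∧ n = Encodable.encode l} := by
  ext n
  constructor
  · rintro ⟨α, hα, l, hl, rfl⟩
    exact ⟨l, valid_of_subdiag hα hl, rfl⟩
  · rintro ⟨l, hl, rfl⟩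
    refine ⟨⟨FinOf L l, L.rel⟩, ⟨finOf_sub hl, fun _ _ _ _ => Iff.rfl⟩,
      l, valid_to_fin hl _ (finOf_sub hl) (finOf_mem l) (finOf_w l), rfl⟩

theorem posD_eq (L : Diag) :
    Gam.posD L = {p | ∃ l m, Valid L.dom (NbrD L) l ∧ Valid L.dom (NbrD L) m ∧
      llt l m ∧ p = (Encodable.encode l, Encodable.encode m)} := by
  ext p
  constructor
  · rintro ⟨α, hα, l, m, hl, hm, hlt, rfl⟩
    exact ⟨l, m, valid_of_subdiag hα hl, valid_of_subdiag hα hm, hlt, rfl⟩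
  · rintro ⟨l, m, hl, hm, hlt, rfl⟩
    have hsub : ↑(FinOf L l ∪ FinOf L m) ⊆ L.dom := by
      rw [Finset.coe_union]
      exact Set.union_subset (finOf_sub hl) (finOf_sub hm)
    refine ⟨⟨FinOf L l ∪ FinOf L m, L.rel⟩, ⟨hsub, fun _ _ _ _ => Iff.rfl⟩,
      l, m,
      valid_to_fin hl _ hsub (fun x hx => Finset.mem_union_left _ (finOf_mem l x hx))
        (fun x hx => Finset.mem_union_left _ (finOf_w l x hx)),
      valid_to_fin hm _ hsub (fun x hx => Finset.mem_union_right _ (finOf_mem m x hx))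
        (fun x hx => Finset.mem_union_right _ (finOf_w m x hx)), hlt, rfl⟩

theorem negD_eq (L : Diag) :
    Gam.negD L = {p | ∃ l m, Valid L.dom (NbrD L) l ∧ Valid L.dom (NbrD L) m ∧
      ¬ llt l m ∧ p = (Encodable.encode l, Encodable.encode m)} := by
  ext p
  constructor
  · rintro ⟨α, hα, l, m, hl, hm, hlt, rfl⟩
    exact ⟨l, m, valid_of_subdiag hα hl, valid_of_subdiag hα hm, hlt, rfl⟩
  · rintro ⟨l, m, hl, hm, hlt, rfl⟩
    have hsub : ↑(FinOf L l ∪ FinOf L m) ⊆ L.dom := by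
      rw [Finset.coe_union]
      exact Set.union_subset (finOf_sub hl) (finOf_sub hm)
    refine ⟨⟨FinOf L l ∪ FinOf L m, L.rel⟩, ⟨hsub, fun _ _ _ _ => Iff.rfl⟩,
      l, m,
      valid_to_fin hl _ hsub (fun x hx => Finset.mem_union_left _ (finOf_mem l x hx))
        (fun x hx => Finset.mem_union_left _ (finOf_w l x hx)),
      valid_to_fin hm _ hsub (fun x hx => Finset.mem_union_right _ (finOf_mem m x hx))
        (fun x hx => Finset.mem_union_right _ (finOf_w m x hx)), hlt, rfl⟩

theorem encode_list_inj {l m : List ℕ} (h : Encodable.encode l = Encodable.encode m) :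
    l = m := Encodable.encode_injective h

theorem gam_outLinear (L : Diag) : Gam.OutLinear L := by
  rw [EOp.OutLinear, memD_eq, posD_eq, negD_eq]
  refine ⟨?_, ?_, ?_, ?_⟩
  · rintro x ⟨l, hl, rfl⟩ ⟨l', m', _, _, hlt, he⟩
    obtain ⟨he1, he2⟩ := Prod.mk.injEq .. ▸ he
    rw [encode_list_inj (he2.symm.trans he1)] at hlt
    exact llt_irrefl _ hlt
  · rintro x hx y hy z hz ⟨l, m, hl, hm, h1, he⟩ ⟨m', n, hm', hn, h2, he'⟩
    obtain ⟨rfl, rfl⟩ := Prod.mk.injEq .. ▸ he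
    obtain ⟨he1, rfl⟩ := Prod.mk.injEq .. ▸ he'
    obtain rfl := encode_list_inj he1
    exact ⟨l, n, hl, hn, llt_trans _ _ _ h1 h2, rfl⟩
  · rintro x ⟨l, hl, rfl⟩ y ⟨m, hm, rfl⟩ hxy
    have hlm : l ≠ m := fun e => hxy (by rw [e])
    rcases llt_total l m hlm with h | h
    · exact Or.inl ⟨l, m, hl, hm, h, rfl⟩
    · exact Or.inr ⟨m, l, hm, hl, h, rfl⟩
  · rintro x ⟨l, hl, rfl⟩ y ⟨m, hm, rfl⟩
    constructor
    · rintro ⟨l', m', _, _, hnlt, he⟩ ⟨l'', m'', _, _, hlt, he'⟩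
      obtain ⟨he1, he2⟩ := Prod.mk.injEq .. ▸ he
      obtain ⟨he3, he4⟩ := Prod.mk.injEq .. ▸ he'
      rw [encode_list_inj (he3.symm.trans he1),
        encode_list_inj (he4.symm.trans he2)] at hlt
      exact hnlt hlt
    · intro hnp
      refine ⟨l, m, hl, hm, fun hlt => hnp ⟨l, m, hl, hm, hlt, rfl⟩, rfl⟩

theorem gam_noGreatest (L : Diag) (hinf : ∀ n : ℕ, ∃ c ∈ L.dom, n < c) :
    ¬ Gam.OutHasGreatest L := by
  rintro ⟨x, hx, hgr⟩
  rw [memD_eq] at hx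
  obtain ⟨l, hl, rfl⟩ := hx
  obtain ⟨a, t, rfl⟩ : ∃ a t, l = a :: t := by
    cases l with
    | nil => exact absurd rfl hl.1
    | cons a t => exact ⟨a, t, rfl⟩
  obtain ⟨c, hc, hac⟩ := hinf a
  have hcv : Valid L.dom (NbrD L) [c] := by
    refine ⟨by simp, by simp, by simpa, by simp⟩
  have hmem : Encodable.encode [c] ∈ Gam.memD L := by
    rw [memD_eq]; exact ⟨[c], hcv, rfl⟩
  have hne : Encodable.encode [c] ≠ Encodable.encode (a :: t) := by
    intro h
    have := encode_list_inj h
    simp only [List.cons.injEq] at this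
    omega
  have := hgr _ hmem hne
  rw [posD_eq] at this
  obtain ⟨l', m', _, _, hlt, he⟩ := this
  obtain ⟨he1, he2⟩ := Prod.mk.injEq .. ▸ he
  obtain rfl := encode_list_inj he1
  obtain rfl := encode_list_inj he2
  exact llt_asymm (show llt (a :: t) [c] from Or.inl hac) hlt

theorem le_foldr_max : ∀ (l : List ℕ), ∀ x ∈ l, x ≤ l.foldr max 0
  | _ :: t, x, hx => by
    rcases List.mem_cons.1 hx with rfl | hx
    · exact le_max_left _ _
    · exact le_trans (le_foldr_max t x hx) (le_max_right _ _)

theorem gam_noLeast (L : Diag) (hinf : ∀ n : ℕ, ∃ c ∈ L.dom, n < c)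
    (hN : ∀ x ∈ L.dom, NbrD L x) : ¬ Gam.OutHasLeast L := by
  rintro ⟨x, hx, hle⟩
  rw [memD_eq] at hx
  obtain ⟨l, hl, rfl⟩ := hx
  obtain ⟨c, hc, hcgt⟩ := hinf (l.foldr max 0)
  have hlc : ∀ y ∈ l, y < c := fun y hy => lt_of_le_of_lt (le_foldr_max l y hy) hcgt
  have hv : Valid L.dom (NbrD L) (l ++ [c]) := by
    refine ⟨by simp, ?_, ?_, ?_⟩
    · rw [List.pairwise_append]
      exact ⟨hl.2.1, List.pairwise_singleton _ _, by simpa using hlc⟩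
    · intro y hy
      rcases List.mem_append.1 hy with hy | hy
      · exact hl.2.2.1 y hy
      · simp only [List.mem_singleton] at hy; exact hy ▸ hc
    · rw [List.dropLast_concat]
      exact fun y hy => hN y (hl.2.2.1 y hy)
  have hne : Encodable.encode (l ++ [c]) ≠ Encodable.encode l := by
    intro h
    have := congrArg List.length (encode_list_inj h)
    simp at this
  have := hle _ (by rw [memD_eq]; exact ⟨_, hv, rfl⟩) hne
  rw [posD_eq] at this
  obtain ⟨l', m', _, _, hlt, he⟩ := this
  obtain ⟨he1, he2⟩ := Prod.mk.injEq .. ▸ he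
  obtain rfl := encode_list_inj he1
  obtain rfl := encode_list_inj he2
  exact llt_asymm (llt_concat l c) hlt

theorem exists_gt_of_mem_dropLast :
    ∀ (l : List ℕ), l.Pairwise (· < ·) → ∀ x ∈ l.dropLast, ∃ y ∈ l, x < y
  | [], _, x, hx => by simp at hx
  | [a], _, x, hx => by simp at hx
  | a :: b :: t, hp, x, hx => by
    have hx' : x ∈ a :: (b :: t).dropLast := by
      simpa [List.dropLast] using hx
    rcases List.mem_cons.1 hx' with rfl | hx'
    · exact ⟨b, by simp, (List.pairwise_cons.1 hp).1 b (by simp)⟩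
    · obtain ⟨y, hy, hxy⟩ :=
        exists_gt_of_mem_dropLast (b :: t) (List.pairwise_cons.1 hp).2 x hx'
      exact ⟨y, List.mem_cons_of_mem a hy, hxy⟩

theorem key (S : Set ℕ) (N : ℕ → Prop) (b : ℕ)
    (hbS : b ∈ S) (hbN : ¬ N b) (hlow : ∀ x ∈ S, x < b → N x) :
    ∀ (l m : List ℕ) (lo : ℕ),
    l.Pairwise (· < ·) → (∀ x, x ∈ l ↔ (x ∈ S ∧ lo ≤ x ∧ x ≤ b)) →
    m.Pairwise (· < ·) → (∀ x ∈ m, x ∈ S ∧ lo ≤ x) →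
    (∀ x ∈ m.dropLast, N x) → m ≠ l → (lo ≤ b ∨ m = []) → llt l m
  | [], m, lo, _, hlmem, _, hmS, _, hne, hlob => by
    have hblo : b < lo := by
      by_contra h
      push_neg at h
      exact absurd ((hlmem b).2 ⟨hbS, h, le_refl b⟩) (by simp)
    rcases hlob with h | rfl
    · omega
    · exact absurd rfl hne
  | c :: l', m, lo, hl, hlmem, hm, hmS, hmN, hne, hlob => by
    have hc : c ∈ S ∧ lo ≤ c ∧ c ≤ b := (hlmem c).1 (by simp)
    cases m with
    | nil => exact trivial
    | cons y m' =>
      have hy : y ∈ S ∧ lo ≤ y := hmS y (by simp)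
      have hcy : c ≤ y := by
        by_contra hyc
        push_neg at hyc
        have hyl : y ∈ c :: l' := (hlmem y).2 ⟨hy.1, hy.2, le_trans (le_of_lt hyc) hc.2.2⟩
        rcases List.mem_cons.1 hyl with rfl | hyl
        · omega
        · exact absurd ((List.pairwise_cons.1 hl).1 y hyl) (by omega)
      rcases Nat.lt_or_ge c y with hlt | hge
      · exact Or.inl hlt
      · have hyc : y = c := by omega
        subst hyc
        refine Or.inr ⟨rfl, ?_⟩
        cases m' with
        | nil =>
          have hl' : l' ≠ [] := by
            intro h; exact hne (by rw [h])
          cases l' with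
          | nil => exact absurd rfl hl'
          | cons a t => exact trivial
        | cons z m'' =>
          have hNy : N y := by
            refine hmN y ?_
            simp [List.dropLast]
          have hyb : y < b := by
            rcases Nat.lt_or_ge y b with h | h
            · exact h
            · have : y = b := by omega
              exact absurd (this ▸ hNy) hbN
          refine key S N b hbS hbN hlow l' (z :: m'') (y + 1)
            (List.pairwise_cons.1 hl).2 ?_ (List.pairwise_cons.1 hm).2 ?_ ?_ ?_ (Or.inl (by omega))
          · intro x
            constructor
            · intro hx
              have h1 := (hlmem x).1 (List.mem_cons_of_mem _ hx)
              have h2 := (List.pairwise_cons.1 hl).1 x hx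
              exact ⟨h1.1, by omega, h1.2.2⟩
            · rintro ⟨hxS, hxy, hxb⟩
              have : x ∈ y :: l' := (hlmem x).2 ⟨hxS, by omega, hxb⟩
              rcases List.mem_cons.1 this with rfl | hx
              · omega
              · exact hx
          · intro x hx
            exact ⟨(hmS x (List.mem_cons_of_mem _ hx)).1,
              by have := (List.pairwise_cons.1 hm).1 x hx; omega⟩
          · intro x hx
            refine hmN x ?_
            simp only [List.dropLast] at hx ⊢
            exact List.mem_cons_of_mem _ hx
          · intro h
            exact hne (by rw [h])

theorem gam_hasLeast (L : Diag) (hB : ∃ x, x ∈ L.dom ∧ ¬ NbrD L x) :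
    Gam.OutHasLeast L := by
  classical
  set b := Nat.find hB with hbdef
  have hbspec : b ∈ L.dom ∧ ¬ NbrD L b := Nat.find_spec hB
  have hlow : ∀ x ∈ L.dom, x < b → NbrD L x := by
    intro x hx hxb
    by_contra h
    exact absurd (Nat.find_min' hB ⟨hx, h⟩) (by omega)
  set T : Finset ℕ := (Finset.range (b + 1)).filter (fun x => x ∈ L.dom) with hTdef
  have hT : ∀ x, x ∈ T ↔ (x ∈ L.dom ∧ x ≤ b) := by
    intro x
    simp [hTdef, Finset.mem_filter, Finset.mem_range, Nat.lt_succ_iff, and_comm]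
  set l : List ℕ := T.sort (· ≤ ·) with hldef
  have hlmem : ∀ x, x ∈ l ↔ (x ∈ L.dom ∧ 0 ≤ x ∧ x ≤ b) := by
    intro x
    rw [hldef, Finset.mem_sort, hT]
    exact ⟨fun ⟨h1, h2⟩ => ⟨h1, Nat.zero_le x, h2⟩, fun ⟨h1, _, h2⟩ => ⟨h1, h2⟩⟩
  have hlp : l.Pairwise (· < ·) := (Finset.sortedLT_sort T).pairwise
  have hbl : b ∈ l := (hlmem b).2 ⟨hbspec.1, Nat.zero_le b, le_refl b⟩
  have hlv : Valid L.dom (NbrD L) l := by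
    refine ⟨List.ne_nil_of_mem hbl, hlp, fun x hx => ((hlmem x).1 hx).1, fun x hx => ?_⟩
    obtain ⟨y, hy, hxy⟩ := exists_gt_of_mem_dropLast l hlp x hx
    have hyb := ((hlmem y).1 hy).2.2
    exact hlow x ((hlmem x).1 (List.dropLast_subset l hx)).1 (by omega)
  refine ⟨Encodable.encode l, by rw [memD_eq]; exact ⟨l, hlv, rfl⟩, ?_⟩
  rintro y hy hne
  rw [memD_eq] at hy
  obtain ⟨m, hm, rfl⟩ := hy
  have hml : m ≠ l := fun e => hne (by rw [e])
  have hlt : llt l m := key L.dom (NbrD L) b hbspec.1 hbspec.2 hlow l m 0 hlp hlmem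
    hm.2.1 (fun x hx => ⟨hm.2.2.1 x hx, Nat.zero_le x⟩) hm.2.2.2 hml (Or.inl (Nat.zero_le b))
  rw [posD_eq]
  exact ⟨l, m, hlv, hm, hlt, rfl⟩

theorem copy_unbounded {k : ℕ} {L : Diag} (h : IsCopyR (relEhat k) L) :
    ∀ n : ℕ, ∃ c ∈ L.dom, n < c := by
  obtain ⟨f, hinj, hrange, _⟩ := h
  have : L.dom.Infinite := hrange ▸ Set.infinite_range_of_injective hinj
  exact fun n => this.exists_gt n

theorem e2_nbr {L : Diag} (h : IsCopyR (relEhat 2) L) : ∀ x ∈ L.dom, NbrD L x := by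
  obtain ⟨f, hinj, hrange, hiff⟩ := h
  intro x hx
  rw [← hrange] at hx
  obtain ⟨i, rfl⟩ := hx
  match i with
  | Sum.inl (a, c) =>
    refine ⟨f (Sum.inl (a, c + 1)), by rw [← hrange]; exact ⟨_, rfl⟩, ?_, Or.inl ?_⟩
    · intro he
      have := hinj he
      simp at this
    · exact (hiff _ _).2 rfl
  | Sum.inr (n, t) =>
    have htlt : t.val < 2 := t.isLt
    refine ⟨f (Sum.inr (n, ⟨1 - t.val, by omega⟩)), by rw [← hrange]; exact ⟨_, rfl⟩,
      ?_, Or.inl ?_⟩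
    · intro he
      have := hinj he
      simp only [Sum.inr.injEq, Prod.mk.injEq, Fin.ext_iff] at this
      omega
    · exact (hiff _ _).2 rfl

theorem e1_sing {L : Diag} (h : IsCopyR (relEhat 1) L) :
    ∃ x, x ∈ L.dom ∧ ¬ NbrD L x := by
  obtain ⟨f, hinj, hrange, hiff⟩ := h
  refine ⟨f (Sum.inr (0, 0)), by rw [← hrange]; exact ⟨_, rfl⟩, ?_⟩
  rintro ⟨y, hy, hne, hrel⟩
  rw [← hrange] at hy
  obtain ⟨j, rfl⟩ := hy
  have hj : relEhat 1 (Sum.inr (0, 0)) j ∨ relEhat 1 j (Sum.inr (0, 0)) := by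
    rcases hrel with hr | hr
    · exact Or.inl ((hiff _ _).1 hr)
    · exact Or.inr ((hiff _ _).1 hr)
  match j, hj with
  | Sum.inl p, hj => simp [relEhat] at hj
  | Sum.inr (m, t), hj =>
    have hm : m = 0 := by
      rcases hj with hj | hj
      · exact (by simpa [relEhat] using hj : (0 : ℕ) = m).symm
      · exact (by simpa [relEhat] using hj : m = 0)
    have ht : t = 0 := Subsingleton.elim t 0
    exact hne (by rw [hm, ht])

end

/-- there is an enumeration operator `Γ` mapping every copy of
`Ê₁` to a linear order with a least element and no greatest element, and every
copy of `Ê₂` to a linear order with neither least nor greatest element. -/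
theorem equivalence_to_orders :
    ∃ Γ : EOp,
      (∀ L : Diag, IsCopyR (relEhat 1) L →
        Γ.OutLinear L ∧ Γ.OutHasLeast L ∧ ¬ Γ.OutHasGreatest L) ∧
      (∀ L : Diag, IsCopyR (relEhat 2) L →
        Γ.OutLinear L ∧ ¬ Γ.OutHasLeast L ∧ ¬ Γ.OutHasGreatest L) := by
  refine ⟨Gam, fun L h => ⟨gam_outLinear L, gam_hasLeast L (e1_sing h),
      gam_noGreatest L (copy_unbounded h)⟩,
    fun L h => ⟨gam_outLinear L, gam_noLeast L (copy_unbounded h) (e2_nbr h),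
      gam_noGreatest L (copy_unbounded h)⟩⟩
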